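/- Let L be a {0,1}-valued random variable and Y, B random variables with finite ranges on the same probability space, with Pr(L=0 | Y=y, B=b) > 0 whenever Pr(Y=y, B=b) > 0. Then susp(Y) ≤ susp(Y,B): revealing an additional random variable B can never decrease the expected suspicion. -/

import Mathlib

open Finset

/-- Probability of an event `E` under the probability mass function `p`
on a finite sample space `Ω`. -/
noncomputable def Pr {Ω : Type*} [Fintype Ω] (p : Ω → ℝ) (E : Set Ω) : ℝ :=
  ∑ ω, E.indicator p ω

/-- Conditional probability `Pr(E | F)`. -/
noncomputable def cPr {Ω : Type*} [Fintype Ω] (p : Ω → ℝ) (E F : Set Ω) : ℝ :=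
  Pr p (E ∩ F) / Pr p F

/-- The suspicion given a random variable `Yv`:
`susp(Y) = Σ_y Pr(Y=y) · (−log₂ Pr(L=0 | Y=y))`. -/
noncomputable def susp {Ω Y : Type*} [Fintype Ω] [Fintype Y] (p : Ω → ℝ)
    (L : Ω → Bool) (Yv : Ω → Y) : ℝ :=
  ∑ y, Pr p {ω | Yv ω = y} * (-Real.logb 2 (cPr p {ω | L ω = false} {ω | Yv ω = y}))

/-- Mutual information (base 2) between two finite-valued random variables. -/
noncomputable def mutInfo {Ω S T : Type*} [Fintype Ω] [Fintype S] [Fintype T]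
    (p : Ω → ℝ) (Xv : Ω → S) (Av : Ω → T) : ℝ :=
  ∑ x, ∑ a, Pr p {ω | Xv ω = x ∧ Av ω = a} *
    Real.logb 2 (Pr p {ω | Xv ω = x ∧ Av ω = a} /
      (Pr p {ω | Xv ω = x} * Pr p {ω | Av ω = a}))

/-- Conditional Shannon entropy (base 2) `H(A | X)`. -/
noncomputable def condEntropy {Ω S T : Type*} [Fintype Ω] [Fintype S] [Fintype T]
    (p : Ω → ℝ) (Av : Ω → T) (Xv : Ω → S) : ℝ :=
  ∑ x, ∑ a, Pr p {ω | Xv ω = x ∧ Av ω = a} *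
    Real.logb 2 (Pr p {ω | Xv ω = x} / Pr p {ω | Xv ω = x ∧ Av ω = a})

/-- Conditional mutual information (base 2) `I(X; A | Z)`. -/
noncomputable def condMutInfo {Ω S T U : Type*} [Fintype Ω] [Fintype S] [Fintype T] [Fintype U]
    (p : Ω → ℝ) (Xv : Ω → S) (Av : Ω → T) (Zv : Ω → U) : ℝ :=
  ∑ z, ∑ x, ∑ a, Pr p {ω | Xv ω = x ∧ Av ω = a ∧ Zv ω = z} *
    Real.logb 2 ((Pr p {ω | Xv ω = x ∧ Av ω = a ∧ Zv ω = z} * Pr p {ω | Zv ω = z}) /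
      (Pr p {ω | Xv ω = x ∧ Zv ω = z} * Pr p {ω | Av ω = a ∧ Zv ω = z}))


lemma Pr_nonneg' {Ω : Type*} [Fintype Ω] {p : Ω → ℝ} (hp : ∀ ω, 0 ≤ p ω) (E : Set Ω) :
    0 ≤ Pr p E :=
  Finset.sum_nonneg fun ω _ => Set.indicator_nonneg (fun x _ => hp x) ω

lemma Pr_mono' {Ω : Type*} [Fintype Ω] {p : Ω → ℝ} (hp : ∀ ω, 0 ≤ p ω) {E F : Set Ω}
    (h : E ⊆ F) : Pr p E ≤ Pr p F :=
  Finset.sum_le_sum fun ω _ => Set.indicator_le_indicator_of_subset h (fun x => hp x) ω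

lemma Pr_fiber_sum {Ω B : Type*} [Fintype Ω] [Fintype B] (p : Ω → ℝ) (C : Set Ω) (Bv : Ω → B) :
    ∑ b, Pr p (C ∩ {ω | Bv ω = b}) = Pr p C := by
  classical
  unfold Pr
  rw [Finset.sum_comm]
  refine Finset.sum_congr rfl fun ω _ => ?_
  simp only [Set.indicator_apply, Set.mem_inter_iff, Set.mem_setOf_eq]
  by_cases h : ω ∈ C
  · simp [h]
  · simp [h]


lemma key_jensen {B : Type*} [Fintype B] (w n : B → ℝ) (hw : ∀ b, 0 ≤ w b)
    (hn : ∀ b, 0 ≤ n b) (hnw : ∀ b, n b ≤ w b) (hq : ∀ b, 0 < w b → 0 < n b / w b) :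
    (∑ b, w b) * (-Real.logb 2 ((∑ b, n b) / (∑ b, w b))) ≤
      ∑ b, w b * (-Real.logb 2 (n b / w b)) := by
  classical
  set W := ∑ b, w b with hW
  set N := ∑ b, n b with hN
  rcases eq_or_lt_of_le (Finset.sum_nonneg fun b _ => hw b : (0:ℝ) ≤ W) with h0 | hWpos
  · have hW0 : W = 0 := h0.symm
    have hz : ∀ b ∈ Finset.univ, w b = 0 :=
      (Finset.sum_eq_zero_iff_of_nonneg fun b _ => hw b).1 hW0
    rw [hW0, zero_mul]
    refine le_of_eq (Finset.sum_eq_zero fun b _ => ?_).symm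
    rw [hz b (Finset.mem_univ b), zero_mul]
  · set t := Finset.univ.filter (fun b => 0 < w b) with ht
    have hwz : ∀ b, b ∉ t → w b = 0 := by
      intro b hb
      simp only [ht, Finset.mem_filter, Finset.mem_univ, true_and, not_lt] at hb
      exact le_antisymm hb (hw b)
    have hWt : ∑ b ∈ t, w b = W := by
      refine Finset.sum_subset (Finset.subset_univ t) fun b _ hb => hwz b hb
    have hNt : ∑ b ∈ t, n b = N := by
      refine Finset.sum_subset (Finset.subset_univ t) fun b _ hb => ?_
      exact le_antisymm ((hnw b).trans_eq (hwz b hb)) (hn b)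
    have hlog2 : (0:ℝ) < Real.log 2 := Real.log_pos one_lt_two
    have hJ : ∑ b ∈ t, w b * Real.log (n b / w b) ≤ W * Real.log (N / W) := by
      have h := (StrictConcaveOn.concaveOn strictConcaveOn_log_Ioi).le_map_sum
        (t := t) (w := fun b => w b / W) (p := fun b => n b / w b)
        (fun b _ => div_nonneg (hw b) hWpos.le)
        (by rw [← Finset.sum_div, hWt, div_self hWpos.ne'])
        (fun b hb => hq b (by simpa [ht] using hb))
      simp only [smul_eq_mul] at h
      have hinner : ∑ b ∈ t, (w b / W) * (n b / w b) = N / W := by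
        rw [← hNt, Finset.sum_div]
        refine Finset.sum_congr rfl fun b hb => ?_
        have hwb : w b ≠ 0 := (by simpa [ht] using hb : 0 < w b).ne'
        field_simp
      rw [hinner] at h
      calc ∑ b ∈ t, w b * Real.log (n b / w b)
          = W * ∑ b ∈ t, (w b / W) * Real.log (n b / w b) := by
            rw [Finset.mul_sum]
            refine Finset.sum_congr rfl fun b _ => ?_
            field_simp
            exact (mul_div_cancel_right₀ _ hWpos.ne').symm
        _ ≤ W * Real.log (N / W) := by
            exact mul_le_mul_of_nonneg_left h hWpos.le
    have hrhs : ∑ b, w b * (-Real.logb 2 (n b / w b)) =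
        ∑ b ∈ t, w b * (-Real.logb 2 (n b / w b)) := by
      symm
      refine Finset.sum_subset (Finset.subset_univ t) fun b _ hb => by
        rw [hwz b hb, zero_mul]
    rw [hrhs]
    simp only [Real.logb]
    calc W * (-(Real.log (N / W) / Real.log 2))
        = (-(W * Real.log (N / W))) / Real.log 2 := by ring
      _ ≤ (-(∑ b ∈ t, w b * Real.log (n b / w b))) / Real.log 2 :=
          div_le_div_of_nonneg_right (neg_le_neg hJ) hlog2.le
      _ = ∑ b ∈ t, w b * (-(Real.log (n b / w b) / Real.log 2)) := by
          rw [← Finset.sum_neg_distrib, Finset.sum_div]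
          refine Finset.sum_congr rfl fun b _ => by ring

/-- revealing an additional random variable `B` can never
decrease the expected suspicion: `susp(Y) ≤ susp(Y,B)`. -/
theorem susp_le_susp_pair {Ω Y B : Type*} [Fintype Ω] [Fintype Y] [Fintype B]
    (p : Ω → ℝ) (hp : ∀ ω, 0 ≤ p ω) (hp1 : ∑ ω, p ω = 1)
    (L : Ω → Bool) (Yv : Ω → Y) (Bv : Ω → B)
    (hpos : ∀ (y : Y) (b : B), 0 < Pr p {ω | Yv ω = y ∧ Bv ω = b} →
      0 < cPr p {ω | L ω = false} {ω | Yv ω = y ∧ Bv ω = b}) :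
    susp p L Yv ≤ susp p L (fun ω => (Yv ω, Bv ω)) := by
  classical
  unfold susp
  rw [Fintype.sum_prod_type]
  apply Finset.sum_le_sum
  intro y _
  have hset : ∀ b : B, {ω | (Yv ω, Bv ω) = (y, b)} = {ω | Yv ω = y ∧ Bv ω = b} := by
    intro b; ext ω; simp [Prod.ext_iff]
  have hset2 : ∀ b : B, {ω | Yv ω = y ∧ Bv ω = b} = {ω | Yv ω = y} ∩ {ω | Bv ω = b} := by
    intro b; ext ω; simp [Set.mem_inter_iff]
  have hset3 : ∀ b : B, {ω | L ω = false} ∩ {ω | Yv ω = y ∧ Bv ω = b}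
      = ({ω | L ω = false} ∩ {ω | Yv ω = y}) ∩ {ω | Bv ω = b} := by
    intro b; ext ω; simp [Set.mem_inter_iff, and_assoc]
  simp only [hset]
  set w : B → ℝ := fun b => Pr p {ω | Yv ω = y ∧ Bv ω = b} with hwdef
  set n : B → ℝ := fun b => Pr p ({ω | L ω = false} ∩ {ω | Yv ω = y ∧ Bv ω = b}) with hndef
  have hWsum : Pr p {ω | Yv ω = y} = ∑ b, w b := by
    rw [← Pr_fiber_sum p {ω | Yv ω = y} Bv]
    exact Finset.sum_congr rfl fun b _ => by rw [hwdef]; simp only [hset2 b]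
  have hNsum : Pr p ({ω | L ω = false} ∩ {ω | Yv ω = y}) = ∑ b, n b := by
    rw [← Pr_fiber_sum p ({ω | L ω = false} ∩ {ω | Yv ω = y}) Bv]
    exact Finset.sum_congr rfl fun b _ => by rw [hndef]; simp only [hset3 b]
  have hkey := key_jensen w n
    (fun b => Pr_nonneg' hp _)
    (fun b => Pr_nonneg' hp _)
    (fun b => Pr_mono' hp Set.inter_subset_right)
    (fun b hb => hpos y b hb)
  unfold cPr
  rw [hWsum, hNsum]
  exact hkey
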